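/- Let γ > 0, r₀ > 0, and let h : (0, r₀] → ℝ be a function such that lim_{r→0+} r^{−γ} sup{ |h(t) − h(r)| : r ≤ t ≤ min(2r, r₀) } = 0. Then the limit L := lim_{r→0+} h(r) exists and is finite, and moreover lim_{r→0+} r^{−γ} |L − h(r)| = 0. -/

import Mathlib

open Set Filter

/-- The real-variable convergence lemma from the proof of Lemma 3.5 of Kang–Kim: if
`h : (0,r₀] → ℝ` satisfies `lim_{r→0+} r^{-γ} sup{|h(t)-h(r)| : r ≤ t ≤ min(2r,r₀)} = 0`,
then `L = lim_{r→0+} h(r)` exists, is finite, and `lim_{r→0+} r^{-γ} |L - h(r)| = 0`. -/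
theorem limit_exists_of_dyadic_oscillation (γ r₀ : ℝ) (hγ : 0 < γ) (hr₀ : 0 < r₀)
    (h : ℝ → ℝ)
    (hosc : ∀ ε : ℝ, 0 < ε → ∃ ρ : ℝ, 0 < ρ ∧ ∀ r : ℝ, 0 < r → r < ρ →
      ∀ t : ℝ, r ≤ t → t ≤ min (2 * r) r₀ → |h t - h r| ≤ ε * r ^ γ) :
    ∃ L : ℝ,
      Filter.Tendsto h (nhdsWithin 0 (Set.Ioi 0)) (nhds L) ∧
      Filter.Tendsto (fun r : ℝ => r ^ (-γ) * |L - h r|)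
        (nhdsWithin 0 (Set.Ioi 0)) (nhds 0) := by
  classical
  set q : ℝ := ((2:ℝ) ^ γ)⁻¹ with hqdef
  have h2γ : (1:ℝ) < (2:ℝ) ^ γ :=
    (Real.one_lt_rpow_iff_of_pos (by norm_num)).2 (Or.inl ⟨one_lt_two, hγ⟩)
  have hq0 : 0 < q := by positivity
  have hq1 : q < 1 := by
    rw [hqdef]
    exact inv_lt_one_of_one_lt₀ h2γ
  have h1q : 0 < 1 - q := by linarith
  -- geometric sum bound
  have hgeom : ∀ n : ℕ, ∑ j ∈ Finset.range n, q ^ (j + 1) ≤ (1 - q)⁻¹ := by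
    intro n
    have h1 : ∑ j ∈ Finset.range n, q ^ (j + 1) ≤ ∑ j ∈ Finset.range n, q ^ j := by
      refine Finset.sum_le_sum fun j _ => ?_
      calc q ^ (j + 1) = q ^ j * q := pow_succ q j
        _ ≤ q ^ j := by nlinarith [pow_nonneg hq0.le j]
    have h2 : ∑ j ∈ Finset.range n, q ^ j ≤ (1 - q)⁻¹ := by
      rw [geom_sum_eq hq1.ne n]
      rw [div_le_iff_of_neg (by linarith : q - 1 < 0)]
      have hqn : 0 ≤ q ^ n := pow_nonneg hq0.le n
      have : (1 - q)⁻¹ * (q - 1) = -1 := by field_simp; ring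
      rw [this]; linarith
    linarith
  -- rpow of dyadic scalings
  have hpow : ∀ k : ℕ, ((2:ℝ) ^ k : ℝ) ^ γ = ((2:ℝ) ^ γ) ^ k := by
    intro k
    rw [← Real.rpow_natCast (2:ℝ) k, ← Real.rpow_natCast ((2:ℝ) ^ γ) k,
      ← Real.rpow_mul (by norm_num), ← Real.rpow_mul (by norm_num), mul_comm]
  have hrq : ∀ r : ℝ, 0 < r → ∀ k : ℕ, (r / 2 ^ k) ^ γ = r ^ γ * q ^ k := by
    intro r hr k
    rw [Real.div_rpow hr.le (by positivity), hpow, hqdef, div_eq_mul_inv, inv_pow]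
  have h2k : ∀ k : ℕ, (1:ℝ) ≤ 2 ^ k := fun k => one_le_pow₀ (by norm_num : (1:ℝ) ≤ 2)
  -- key lemma: uniform Cauchy-type estimate
  have key : ∀ ε : ℝ, 0 < ε → ∃ ρ : ℝ, 0 < ρ ∧ ρ ≤ r₀ ∧
      ∀ r s : ℝ, 0 < s → s ≤ r → r < ρ → |h s - h r| ≤ ε * r ^ γ := by
    intro ε hε
    set C : ℝ := (1 - q)⁻¹ + 1 with hCdef
    have hC : 0 < C := by positivity
    obtain ⟨ρ, hρ, H⟩ := hosc (ε / C) (by positivity)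
    refine ⟨min ρ r₀, lt_min hρ hr₀, min_le_right _ _, ?_⟩
    intro r s hs hsr hrρ
    have hr : 0 < r := hs.trans_le hsr
    have hrρ' : r < ρ := lt_of_lt_of_le hrρ (min_le_left _ _)
    have hrr₀ : r ≤ r₀ := le_of_lt (lt_of_lt_of_le hrρ (min_le_right _ _))
    have hdivle : ∀ k : ℕ, r / 2 ^ k ≤ r := fun k => div_le_self hr.le (h2k k)
    -- chain estimate along dyadic scales
    have chain : ∀ k : ℕ, |h (r / 2 ^ k) - h r| ≤
        (ε / C) * r ^ γ * ∑ j ∈ Finset.range k, q ^ (j + 1) := by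
      intro k
      induction k with
      | zero => simp
      | succ k ih =>
        have hhalf : (2:ℝ) * (r / 2 ^ (k + 1)) = r / 2 ^ k := by
          rw [pow_succ]; field_simp
        have step : |h (r / 2 ^ k) - h (r / 2 ^ (k + 1))| ≤ (ε / C) * (r / 2 ^ (k + 1)) ^ γ := by
          refine H (r / 2 ^ (k + 1)) (by positivity)
            (lt_of_le_of_lt (hdivle (k + 1)) hrρ') (r / 2 ^ k) ?_ ?_
          · rw [← hhalf]; nlinarith [div_pos hr (pow_pos two_pos (k+1))]
          · refine le_min ?_ (le_trans (hdivle k) hrr₀)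
            rw [hhalf]
        have hsum : ∑ j ∈ Finset.range (k + 1), q ^ (j + 1)
            = (∑ j ∈ Finset.range k, q ^ (j + 1)) + q ^ (k + 1) :=
          Finset.sum_range_succ _ _
        calc |h (r / 2 ^ (k + 1)) - h r|
            ≤ |h (r / 2 ^ k) - h (r / 2 ^ (k + 1))| + |h (r / 2 ^ k) - h r| := by
              rw [abs_sub_comm (h (r / 2 ^ k))]
              exact abs_sub_le _ _ _ |>.trans_eq (by rw [abs_sub_comm]) |>.trans_eq rfl
          _ ≤ (ε / C) * (r / 2 ^ (k + 1)) ^ γ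
              + (ε / C) * r ^ γ * ∑ j ∈ Finset.range k, q ^ (j + 1) := add_le_add step ih
          _ = (ε / C) * r ^ γ * ∑ j ∈ Finset.range (k + 1), q ^ (j + 1) := by
              rw [hrq r hr (k + 1), hsum]; ring
    -- bridge from s to a dyadic scale of r
    have hex : ∃ k : ℕ, r / 2 ^ (k + 1) < s := by
      obtain ⟨n, hn⟩ := pow_unbounded_of_one_lt (r / s) (one_lt_two (α := ℝ))
      refine ⟨n, ?_⟩
      rw [div_lt_iff₀ (by positivity : (0:ℝ) < 2 ^ (n + 1))]
      rw [div_lt_iff₀ hs] at hn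
      have h2n : (2:ℝ) ^ n ≤ 2 ^ (n + 1) := by
        rw [pow_succ]; nlinarith [pow_pos (two_pos : (0:ℝ) < 2) n]
      nlinarith [pow_pos (two_pos : (0:ℝ) < 2) n]
    set k := Nat.find hex with hkdef
    have hk1 : r / 2 ^ (k + 1) < s := Nat.find_spec hex
    have hk2 : s ≤ r / 2 ^ k := by
      rcases Nat.eq_zero_or_pos k with hk0 | hkpos
      · rw [hk0]; simpa using hsr
      · obtain ⟨m, hm⟩ := Nat.exists_eq_succ_of_ne_zero hkpos.ne'
        have hmlt : m < k := by omega
        have hfm := Nat.find_min hex (hkdef ▸ hmlt)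
        push_neg at hfm
        rw [hm]
        exact hfm
    have hhalf : (2:ℝ) * (r / 2 ^ (k + 1)) = r / 2 ^ k := by
      rw [pow_succ]; field_simp
    have hs2 : |h s - h (r / 2 ^ (k + 1))| ≤ (ε / C) * (r / 2 ^ (k + 1)) ^ γ := by
      refine H (r / 2 ^ (k + 1)) (by positivity)
        (lt_of_le_of_lt (hdivle (k + 1)) hrρ') s hk1.le ?_
      refine le_min ?_ (hsr.trans hrr₀)
      rw [hhalf]; exact hk2
    have hrpow_le : (r / 2 ^ (k + 1)) ^ γ ≤ r ^ γ :=
      Real.rpow_le_rpow (by positivity) (hdivle (k + 1)) hγ.le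
    have hrγpos : (0:ℝ) < r ^ γ := Real.rpow_pos_of_pos hr γ
    have hchain := chain (k + 1)
    have hsum_le := hgeom (k + 1)
    have hεC : 0 < ε / C := by positivity
    calc |h s - h r| ≤ |h s - h (r / 2 ^ (k + 1))| + |h (r / 2 ^ (k + 1)) - h r| :=
          abs_sub_le _ _ _
      _ ≤ (ε / C) * r ^ γ + (ε / C) * r ^ γ * (1 - q)⁻¹ := by
          have h1 : |h s - h (r / 2 ^ (k + 1))| ≤ (ε / C) * r ^ γ :=
            hs2.trans (by nlinarith)
          have h2 : |h (r / 2 ^ (k + 1)) - h r| ≤ (ε / C) * r ^ γ * (1 - q)⁻¹ :=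
            hchain.trans (mul_le_mul_of_nonneg_left hsum_le (by positivity))
          linarith
      _ = ε * r ^ γ := by
          rw [hCdef]; field_simp; ring
    -- end key
  have hFneBot : (nhdsWithin (0:ℝ) (Set.Ioi 0)).NeBot := nhdsGT_neBot 0
  have hcauchy : Cauchy (Filter.map h (nhdsWithin (0:ℝ) (Set.Ioi 0))) := by
    rw [Metric.cauchy_iff]
    refine ⟨Filter.map_neBot, ?_⟩
    intro δ hδ
    obtain ⟨ρ, hρ, hρr₀, K⟩ := key (δ / (2 * (r₀ ^ γ + 1)))
      (by positivity)
    refine ⟨h '' Ioo 0 ρ, image_mem_map (Ioo_mem_nhdsGT_of_mem ⟨le_refl 0, hρ⟩), ?_⟩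
    have hX : (0:ℝ) < r₀ ^ γ + 1 := by positivity
    have bound : ∀ a b : ℝ, a ∈ Ioo (0:ℝ) ρ → b ∈ Ioo (0:ℝ) ρ → a ≤ b → |h a - h b| < δ := by
      intro a b ha hb hab
      have hK := K b a ha.1 hab hb.2
      have hbγ : b ^ γ ≤ r₀ ^ γ :=
        Real.rpow_le_rpow hb.1.le (le_of_lt (lt_of_lt_of_le hb.2 hρr₀)) hγ.le
      have hbγ0 : 0 ≤ b ^ γ := Real.rpow_nonneg hb.1.le γ
      calc |h a - h b| ≤ (δ / (2 * (r₀ ^ γ + 1))) * b ^ γ := hK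
        _ ≤ (δ / (2 * (r₀ ^ γ + 1))) * (r₀ ^ γ + 1) := by
            apply mul_le_mul_of_nonneg_left _ (by positivity)
            linarith
        _ = δ / 2 := by field_simp
        _ < δ := by linarith
    rintro x ⟨a, ha, rfl⟩ y ⟨b, hb, rfl⟩
    rw [Real.dist_eq]
    rcases le_total a b with hab | hab
    · exact bound a b ha hb hab
    · rw [abs_sub_comm]; exact bound b a hb ha hab
  obtain ⟨L, hL⟩ := CompleteSpace.complete hcauchy
  have hTend : Filter.Tendsto h (nhdsWithin 0 (Set.Ioi 0)) (nhds L) := hL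
  refine ⟨L, hTend, ?_⟩
  rw [Metric.tendsto_nhds]
  intro δ hδ
  obtain ⟨ρ, hρ, hρr₀, K⟩ := key (δ / 2) (by positivity)
  filter_upwards [Ioo_mem_nhdsGT_of_mem (Set.mem_Ico.2 ⟨le_refl 0, hρ⟩)] with r hr
  have hrγ : 0 < r ^ γ := Real.rpow_pos_of_pos hr.1 γ
  have hLr : |L - h r| ≤ (δ / 2) * r ^ γ := by
    have hmem : Ioc (0:ℝ) r ∈ nhdsWithin (0:ℝ) (Set.Ioi 0) :=
      Ioc_mem_nhdsGT_of_mem (Set.mem_Ico.2 ⟨le_refl 0, hr.1⟩)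
    have htend : Filter.Tendsto (fun s => |h s - h r|) (nhdsWithin 0 (Set.Ioi 0))
        (nhds |L - h r|) := ((hTend.sub tendsto_const_nhds).abs)
    refine le_of_tendsto htend ?_
    filter_upwards [hmem] with s hs
    exact K r s hs.1 hs.2 hr.2
  rw [Real.dist_eq, sub_zero,
    abs_of_nonneg (mul_nonneg (Real.rpow_nonneg hr.1.le _) (abs_nonneg _))]
  calc r ^ (-γ) * |L - h r| ≤ r ^ (-γ) * ((δ / 2) * r ^ γ) :=
        mul_le_mul_of_nonneg_left hLr (Real.rpow_nonneg hr.1.le _)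
    _ = δ / 2 := by
        rw [Real.rpow_neg hr.1.le]
        field_simp
    _ < δ := by linarith
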